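/- Let 𝒱 be a multivector field on a finite abstract simplicial complex K and let S ⊆ K be 𝒱-compatible. Suppose every path under 𝒱 contained in cl(S) whose first and last simplices lie in S has all of its simplices in S. Then: (i) mo(S) is closed; (ii) F_𝒱(mo(S)) ∩ cl(S) ⊆ mo(S); and (iii) F_𝒱(cl(S) ∖ mo(S)) ⊆ cl(S). (These are the combinatorial conditions making (cl(S), mo(S)) an index pair for S.) -/

import Mathlib

/-- A finite abstract simplicial complex: a finite family of nonempty finite
subsets (simplices) of a vertex type, closed under taking nonempty subsets. -/
structure SComplex (V : Type*) where
  carrier : Set (Finset V)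
  finite : carrier.Finite
  nonempty_mem : ∀ σ ∈ carrier, σ.Nonempty
  down_closed : ∀ σ ∈ carrier, ∀ τ : Finset V, τ ⊆ σ → τ.Nonempty → τ ∈ carrier

namespace SComplex

variable {V : Type*}

/-- The closure of a set of simplices: all faces (in `K`) of its members. -/
def cl (K : SComplex V) (A : Set (Finset V)) : Set (Finset V) :=
  {σ ∈ K.carrier | ∃ τ ∈ A, σ ⊆ τ}

/-- A set of simplices is closed if it equals its closure. -/
def Closed (K : SComplex V) (A : Set (Finset V)) : Prop :=
  K.cl A = A

/-- The mouth of a set of simplices: its closure minus itself. -/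
def mo (K : SComplex V) (A : Set (Finset V)) : Set (Finset V) :=
  K.cl A \ A

/-- A set `A ⊆ K` is convex if `σ₁ ⊆ σ ⊆ σ₂` with `σ₁, σ₂ ∈ A`, `σ ∈ K`,
implies `σ ∈ A`. -/
def IsConvex (K : SComplex V) (A : Set (Finset V)) : Prop :=
  A ⊆ K.carrier ∧
    ∀ σ₁ ∈ A, ∀ σ₂ ∈ A, ∀ σ ∈ K.carrier, σ₁ ⊆ σ → σ ⊆ σ₂ → σ ∈ A

end SComplex

/-- A multivector field on `K`: a partition of `K` into multivectors
(nonempty convex subsets of `K`). -/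
structure MVF {V : Type*} (K : SComplex V) where
  vectors : Set (Set (Finset V))
  nonempty_mem : ∀ W ∈ vectors, W.Nonempty
  convex : ∀ W ∈ vectors, K.IsConvex W
  cover : ∀ σ ∈ K.carrier, ∃ W ∈ vectors, σ ∈ W
  eq_of_inter : ∀ W₁ ∈ vectors, ∀ W₂ ∈ vectors, (W₁ ∩ W₂).Nonempty → W₁ = W₂

variable {V : Type*}

/-- The dynamics `F(σ) = [σ] ∪ cl(σ)` associated with a family `vs` of
multivectors: the union of the members of `vs` containing `σ` (for a partition,
this is the unique class `[σ]`), together with the closure of `σ`. -/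
def Fdyn (K : SComplex V) (vs : Set (Set (Finset V))) (σ : Finset V) :
    Set (Finset V) :=
  (⋃₀ {W ∈ vs | σ ∈ W}) ∪ K.cl {σ}

/-- Extension of the dynamics to sets: `F(A) = ⋃_{σ ∈ A} F(σ)`. -/
def FdynSet (K : SComplex V) (vs : Set (Set (Finset V))) (A : Set (Finset V)) :
    Set (Finset V) :=
  ⋃ σ ∈ A, Fdyn K vs σ

/-- `ρ 0, ρ 1, …, ρ n` is a path under the family `vs`: each simplex lies in
`K` and each successive simplex lies in the image of its predecessor under
the dynamics. -/
def IsPath (K : SComplex V) (vs : Set (Set (Finset V))) (n : ℕ)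
    (ρ : ℕ → Finset V) : Prop :=
  (∀ i ≤ n, ρ i ∈ K.carrier) ∧
    ∀ i, 1 ≤ i → i ≤ n → ρ i ∈ Fdyn K vs (ρ (i - 1))

/-- `𝒱₁` refines `𝒱₂` (written `𝒱₁ ⊑ 𝒱₂`): every multivector of `𝒱₁` is
contained in some multivector of `𝒱₂`. -/
def Refines {K : SComplex V} (𝒱₁ 𝒱₂ : MVF K) : Prop :=
  ∀ W ∈ 𝒱₁.vectors, ∃ W' ∈ 𝒱₂.vectors, W ⊆ W'

/-- The intersection field `𝒱₁ ⊓ 𝒱₂ = {V₁ ∩ V₂ : V₁ ∈ 𝒱₁, V₂ ∈ 𝒱₂} \ {∅}`. -/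
def interField {K : SComplex V} (𝒱₁ 𝒱₂ : MVF K) : Set (Set (Finset V)) :=
  {A | (∃ W₁ ∈ 𝒱₁.vectors, ∃ W₂ ∈ 𝒱₂.vectors, A = W₁ ∩ W₂) ∧ A.Nonempty}

/-- A set is `𝒱`-compatible if it is a union of multivectors of `𝒱`. -/
def Compat {K : SComplex V} (𝒱 : MVF K) (S : Set (Finset V)) : Prop :=
  ∃ 𝒜 ⊆ 𝒱.vectors, S = ⋃₀ 𝒜

/-- if `S` is `𝒱`-compatible and every path under `𝒱` in
`cl(S)` with endpoints in `S` stays in `S`, then `mo(S)` is closed,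
`F(mo(S)) ∩ cl(S) ⊆ mo(S)`, and `F(cl(S) \ mo(S)) ⊆ cl(S)`; i.e.,
`(cl(S), mo(S))` satisfies the combinatorial index-pair conditions. -/
theorem stmt5 {V : Type*} {K : SComplex V} (𝒱 : MVF K) (S : Set (Finset V))
    (hcompat : Compat 𝒱 S)
    (hiso : ∀ (n : ℕ) (ρ : ℕ → Finset V), IsPath K 𝒱.vectors n ρ →
      (∀ i ≤ n, ρ i ∈ K.cl S) → ρ 0 ∈ S → ρ n ∈ S → ∀ i ≤ n, ρ i ∈ S) :
    K.Closed (K.mo S) ∧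
    FdynSet K 𝒱.vectors (K.mo S) ∩ K.cl S ⊆ K.mo S ∧
    FdynSet K 𝒱.vectors (K.cl S \ K.mo S) ⊆ K.cl S := by

  obtain ⟨𝒜, h𝒜, hS⟩ := hcompat
  have hSK : S ⊆ K.carrier := by
    intro σ hσ
    rw [hS] at hσ
    obtain ⟨A, hA, hσA⟩ := hσ
    exact (𝒱.convex A (h𝒜 hA)).1 hσA
  have hScl : S ⊆ K.cl S := fun σ hσ => ⟨hSK hσ, σ, hσ, subset_rfl⟩
  have hvec : ∀ W ∈ 𝒱.vectors, ∀ y ∈ W, y ∈ S → W ⊆ S := by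
    intro W hW y hyW hyS
    rw [hS] at hyS ⊢
    obtain ⟨A, hA, hyA⟩ := hyS
    have hWA := 𝒱.eq_of_inter W hW A (h𝒜 hA) ⟨y, hyW, hyA⟩
    subst hWA
    exact Set.subset_sUnion_of_mem hA
  have hclosed : K.Closed (K.mo S) := by
    apply Set.Subset.antisymm
    · rintro σ ⟨hσK, τ, hτmo, hστ⟩
      obtain ⟨hτcl, hτS⟩ := hτmo
      obtain ⟨hτK, τ', hτ'S, hττ'⟩ := hτcl
      have hσcl : σ ∈ K.cl S := ⟨hσK, τ', hτ'S, hστ.trans hττ'⟩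
      refine ⟨hσcl, fun hσS => hτS ?_⟩
      set ρ : ℕ → Finset V := fun i => if i = 0 then τ' else if i = 1 then τ else σ with hρ
      have hpath : IsPath K 𝒱.vectors 2 ρ := by
        constructor
        · intro i hi
          interval_cases i <;> simp [ρ, hSK hτ'S, hτK, hσK]
        · intro i h1 h2
          interval_cases i
          · show ρ 1 ∈ Fdyn K 𝒱.vectors (ρ 0)
            simp only [ρ]
            norm_num
            exact Or.inr ⟨hτK, τ', rfl, hττ'⟩
          · show ρ 2 ∈ Fdyn K 𝒱.vectors (ρ 1)
            simp only [ρ]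
            norm_num
            exact Or.inr ⟨hσK, τ, rfl, hστ⟩
      have hmem := hiso 2 ρ hpath ?_ ?_ ?_ 1 (by norm_num)
      · simpa [ρ] using hmem
      · intro i hi
        interval_cases i
        · simpa [ρ] using hScl hτ'S
        · have hτcl : τ ∈ K.cl S := ⟨hτK, τ', hτ'S, hττ'⟩
          simpa [ρ] using hτcl
        · simpa [ρ] using hσcl
      · simpa [ρ] using hτ'S
      · simpa [ρ] using hσS
    · intro σ hσ
      exact ⟨hσ.1.1, σ, hσ, subset_rfl⟩
  refine ⟨hclosed, ?_, ?_⟩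
  · rintro y ⟨hy, hycl⟩
    simp only [FdynSet, Set.mem_iUnion] at hy
    obtain ⟨σ, hσmo, hyF⟩ := hy
    rcases hyF with hy1 | hy2
    · obtain ⟨W, ⟨hW, hσW⟩, hyW⟩ := hy1
      exact ⟨hycl, fun hyS => hσmo.2 (hvec W hW y hyW hyS hσW)⟩
    · obtain ⟨hyK, τ, hτ, hyτ⟩ := hy2
      have hmem : y ∈ K.cl (K.mo S) := ⟨hyK, σ, hσmo, hτ ▸ hyτ⟩
      rwa [hclosed] at hmem
  · have hdiff : K.cl S \ K.mo S = S := by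
      ext σ
      constructor
      · rintro ⟨h1, h2⟩
        by_contra hn
        exact h2 ⟨h1, hn⟩
      · intro h
        exact ⟨hScl h, fun hm => hm.2 h⟩
    rw [hdiff]
    rintro y hy
    simp only [FdynSet, Set.mem_iUnion] at hy
    obtain ⟨σ, hσS, hyF⟩ := hy
    rcases hyF with hy1 | hy2
    · obtain ⟨W, ⟨hW, hσW⟩, hyW⟩ := hy1
      exact hScl (hvec W hW σ hσW hσS hyW)
    · obtain ⟨hyK, τ, hτ, hyτ⟩ := hy2
      exact ⟨hyK, σ, hσS, hτ ▸ hyτ⟩
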